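/- The set function f_D(S) = log det(cI + Σ_{i∈S} φᵢφᵢᵀ) is submodular: for all S ⊆ T and any index k ∉ T, f_D(S ∪ {k}) - f_D(S) ≥ f_D(T ∪ {k}) - f_D(T). -/

import Mathlib

set_option linter.unusedSectionVars false


open Matrix

section Aux

variable {m : Type*} [Fintype m] [DecidableEq m]

private lemma aux_mul_vecMulVec (A : Matrix m m ℝ) (b c : m → ℝ) :
    A * vecMulVec b c = vecMulVec (A *ᵥ b) c := by
  ext i j
  simp [Matrix.mul_apply, vecMulVec_apply, Matrix.mulVec, dotProduct,
    Finset.sum_mul, mul_assoc]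

private lemma aux_vecMulVec_mul (A : Matrix m m ℝ) (b c : m → ℝ) :
    vecMulVec b c * A = vecMulVec b (Aᵀ *ᵥ c) := by
  ext i j
  simp [Matrix.mul_apply, vecMulVec_apply, Matrix.mulVec, dotProduct,
    Finset.mul_sum, mul_comm, mul_left_comm]

private lemma aux_vecMulVec_mulVec (b c x : m → ℝ) :
    vecMulVec b c *ᵥ x = (c ⬝ᵥ x) • b := by
  ext i
  simp [vecMulVec_apply, Matrix.mulVec, dotProduct, Finset.sum_mul, mul_comm,
    mul_left_comm, Finset.mul_sum]

private lemma aux_psd_vecMulVec (v : m → ℝ) : (vecMulVec v v).PosSemidef := by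
  refine Matrix.PosSemidef.of_dotProduct_mulVec_nonneg ?_ ?_
  · ext i j
    simp [Matrix.conjTranspose, vecMulVec_apply, mul_comm]
  · intro x
    have : star x ⬝ᵥ (vecMulVec v v *ᵥ x) = (v ⬝ᵥ x) * (v ⬝ᵥ x) := by
      rw [aux_vecMulVec_mulVec]
      simp [dotProduct_smul, dotProduct_comm x v, mul_comm]
    rw [this]
    exact mul_self_nonneg _

private lemma aux_transpose_eq {N : Matrix m m ℝ} (hN : N.IsHermitian) : Nᵀ = N := by
  ext i j
  simpa using congrFun (congrFun hN.eq i) j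

private lemma aux_symm_mulVec {N : Matrix m m ℝ} (hN : N.IsHermitian) (u : m → ℝ) :
    u ᵥ* N = N *ᵥ u := by
  rw [← Matrix.mulVec_transpose, aux_transpose_eq hN]

private lemma aux_psd_sum {ι : Type*} [Fintype ι] [DecidableEq ι]
    (u : ι → m → ℝ) (D : Finset ι) :
    (∑ i ∈ D, vecMulVec (u i) (u i)).PosSemidef := by
  induction D using Finset.induction_on with
  | empty => simpa using Matrix.PosSemidef.zero
  | insert _ _ hx ih =>
    rw [Finset.sum_insert hx]
    exact (aux_psd_vecMulVec _).add ih

/-- Sherman–Morrison style inequality: adding a rank-one PSD update to a positive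
definite matrix decreases the quadratic form of the inverse. -/
private lemma aux_key {M : Matrix m m ℝ} (hM : M.PosDef) (u v : m → ℝ) :
    v ⬝ᵥ (M + vecMulVec u u)⁻¹ *ᵥ v ≤ v ⬝ᵥ M⁻¹ *ᵥ v := by
  set N := M⁻¹ with hNdef
  have hNherm : N.IsHermitian := hM.inv.isHermitian
  have hMN : M * N = 1 := Matrix.mul_nonsing_inv M (isUnit_iff_ne_zero.mpr hM.det_pos.ne')
  have ha : 0 ≤ u ⬝ᵥ N *ᵥ u := by simpa using hM.inv.posSemidef.dotProduct_mulVec_nonneg u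
  set a : ℝ := u ⬝ᵥ N *ᵥ u with hadef
  have hd : (0:ℝ) < 1 + a := by linarith
  set w : m → ℝ := N *ᵥ u with hwdef
  set K : Matrix m m ℝ := N - (1 + a)⁻¹ • vecMulVec w w with hKdef
  have hMw : M *ᵥ w = u := by
    rw [hwdef, Matrix.mulVec_mulVec, hMN, Matrix.one_mulVec]
  have huN : u ᵥ* N = w := aux_symm_mulVec hNherm u
  have hinv : (M + vecMulVec u u) * K = 1 := by
    rw [hKdef, Matrix.mul_sub, Matrix.add_mul, Matrix.add_mul, hMN]
    rw [Matrix.mul_smul, Matrix.mul_smul]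
    rw [aux_mul_vecMulVec M w w, hMw]
    rw [aux_vecMulVec_mul, aux_mul_vecMulVec]
    have h1 : Nᵀ *ᵥ u = w := (Matrix.mulVec_transpose N u).trans huN
    have h2 : vecMulVec u u *ᵥ w = a • u := by
      rw [aux_vecMulVec_mulVec]
    rw [h1, h2]
    have h3 : vecMulVec (a • u) w = a • vecMulVec u w := by
      ext i j; simp [vecMulVec_apply, mul_assoc]
    rw [h3, smul_smul]
    have hne : (1:ℝ) + a ≠ 0 := ne_of_gt hd
    match_scalars <;> field_simp <;> ring
  have hinv' : (M + vecMulVec u u)⁻¹ = K := Matrix.inv_eq_right_inv hinv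
  rw [hinv', hKdef]
  rw [Matrix.sub_mulVec, dotProduct_sub]
  have : v ⬝ᵥ ((1 + a)⁻¹ • vecMulVec w w) *ᵥ v = (1 + a)⁻¹ * ((w ⬝ᵥ v) * (w ⬝ᵥ v)) := by
    rw [Matrix.smul_mulVec, dotProduct_smul, aux_vecMulVec_mulVec]
    simp [dotProduct_smul, dotProduct_comm v w, mul_comm, mul_left_comm]
  rw [this]
  have h0 : 0 ≤ (1 + a)⁻¹ * ((w ⬝ᵥ v) * (w ⬝ᵥ v)) :=
    mul_nonneg (le_of_lt (inv_pos.mpr hd)) (mul_self_nonneg _)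
  linarith

private lemma aux_pd (c : ℝ) (hc : 0 < c) {ι : Type*} [Fintype ι] [DecidableEq ι]
    (φ : ι → m → ℝ) (A : Finset ι) :
    (c • (1 : Matrix m m ℝ) + ∑ i ∈ A, vecMulVec (φ i) (φ i)).PosDef := by
  have h1 : (c • (1 : Matrix m m ℝ)).PosDef := by
    rw [Matrix.smul_one_eq_diagonal]
    exact Matrix.posDef_diagonal_iff.mpr (fun _ => hc)
  exact h1.add_posSemidef (aux_psd_sum φ A)

/-- adding any finite PSD rank-one sum decreases the quadratic form of the inverse -/
private lemma aux_mono {ι : Type*} [Fintype ι] [DecidableEq ι]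
    {M : Matrix m m ℝ} (hM : M.PosDef) (u : ι → m → ℝ) (D : Finset ι) (v : m → ℝ) :
    v ⬝ᵥ (M + ∑ i ∈ D, vecMulVec (u i) (u i))⁻¹ *ᵥ v ≤ v ⬝ᵥ M⁻¹ *ᵥ v := by
  induction D using Finset.induction_on with
  | empty => simp
  | insert j D hj ih =>
    have hMD : (M + ∑ i ∈ D, vecMulVec (u i) (u i)).PosDef :=
      hM.add_posSemidef (aux_psd_sum u D)
    have step := aux_key hMD (u j) v
    rw [Finset.sum_insert hj, add_comm (vecMulVec (u j) (u j)), ← add_assoc]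
    exact le_trans step ih

/-- the marginal gain of adding one index -/
private lemma aux_gain (c : ℝ) (hc : 0 < c) {ι : Type*} [Fintype ι] [DecidableEq ι]
    (φ : ι → m → ℝ) (A : Finset ι) (k : ι) (hk : k ∉ A) :
    Real.log ((c • (1 : Matrix m m ℝ) + ∑ i ∈ insert k A, vecMulVec (φ i) (φ i)).det)
      - Real.log ((c • (1 : Matrix m m ℝ) + ∑ i ∈ A, vecMulVec (φ i) (φ i)).det)
      = Real.log (1 + φ k ⬝ᵥ (c • (1 : Matrix m m ℝ)
          + ∑ i ∈ A, vecMulVec (φ i) (φ i))⁻¹ *ᵥ φ k) := by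
  set M := c • (1 : Matrix m m ℝ) + ∑ i ∈ A, vecMulVec (φ i) (φ i) with hMdef
  have hMpd : M.PosDef := aux_pd c hc φ A
  have hdet : (0:ℝ) < M.det := hMpd.det_pos
  have hsum : c • (1 : Matrix m m ℝ) + ∑ i ∈ insert k A, vecMulVec (φ i) (φ i)
      = M + vecMulVec (φ k) (φ k) := by
    rw [Finset.sum_insert hk, hMdef]
    abel
  have hdetlem : (M + vecMulVec (φ k) (φ k)).det
      = M.det * (1 + φ k ⬝ᵥ M⁻¹ *ᵥ φ k) := by
    rw [vecMulVec_eq Unit (φ k) (φ k),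
      Matrix.det_add_replicateCol_mul_replicateRow (isUnit_iff_ne_zero.mpr hMpd.det_pos.ne')]
    congr 1
    rw [Matrix.mul_assoc, ← Matrix.replicateCol_mulVec, Matrix.det_unique]
    simp
  have hq : 0 ≤ φ k ⬝ᵥ M⁻¹ *ᵥ φ k := by simpa using hMpd.inv.posSemidef.dotProduct_mulVec_nonneg (φ k)
  have hpos : (0:ℝ) < 1 + φ k ⬝ᵥ M⁻¹ *ᵥ φ k := by linarith
  rw [hsum, hdetlem, Real.log_mul (ne_of_gt hdet) (ne_of_gt hpos)]
  ring

end Aux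

/-- The D-optimality set function `f_D(S) = log det(cI + Σ_{i∈S} φᵢφᵢᵀ)` is
submodular: for `S ⊆ T` and `k ∉ T`,
`f_D(S ∪ {k}) - f_D(S) ≥ f_D(T ∪ {k}) - f_D(T)`. -/
theorem stmt_3 {n : ℕ} {ι : Type*} [Fintype ι] [DecidableEq ι]
    (c : ℝ) (hc : 0 < c) (φ : ι → Fin n → ℝ)
    (S T : Finset ι) (hST : S ⊆ T) (k : ι) (hk : k ∉ T)
    (fD : Finset ι → ℝ)
    (hfD : ∀ A : Finset ι, fD A = Real.log ((c • (1 : Matrix (Fin n) (Fin n) ℝ)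
        + ∑ i ∈ A, vecMulVec (φ i) (φ i)).det)) :
    fD (insert k T) - fD T ≤ fD (insert k S) - fD S := by
  have hkS : k ∉ S := fun h => hk (hST h)
  set MS := c • (1 : Matrix (Fin n) (Fin n) ℝ) + ∑ i ∈ S, vecMulVec (φ i) (φ i) with hMS
  set MT := c • (1 : Matrix (Fin n) (Fin n) ℝ) + ∑ i ∈ T, vecMulVec (φ i) (φ i) with hMT
  have hgainT := aux_gain c hc φ T k hk
  have hgainS := aux_gain c hc φ S k hkS
  rw [hfD (insert k T), hfD T, hfD (insert k S), hfD S, hgainT, hgainS]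
  have hMSpd : MS.PosDef := aux_pd c hc φ S
  have hMTeq : MT = MS + ∑ i ∈ T \ S, vecMulVec (φ i) (φ i) := by
    rw [hMT, hMS, add_assoc]
    congr 1
    rw [add_comm, Finset.sum_sdiff hST]
  have hmono : φ k ⬝ᵥ MT⁻¹ *ᵥ φ k ≤ φ k ⬝ᵥ MS⁻¹ *ᵥ φ k := by
    rw [hMTeq]
    exact aux_mono hMSpd (fun i => φ i) (T \ S) (φ k)
  have hqT : 0 ≤ φ k ⬝ᵥ MT⁻¹ *ᵥ φ k := by
    simpa using (aux_pd c hc φ T).inv.posSemidef.dotProduct_mulVec_nonneg (φ k)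
  have h1 : (0:ℝ) < 1 + φ k ⬝ᵥ MT⁻¹ *ᵥ φ k := by linarith
  have h2 : (0:ℝ) < 1 + φ k ⬝ᵥ MS⁻¹ *ᵥ φ k := by linarith
  exact (Real.log_le_log_iff h1 h2).mpr (by linarith)
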